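/- Let A ∈ M_m(ℂ) be self-adjoint and let t ∈ [0,1]. Then ∫_0^t λ_A(s) ds = sup{ tr(AC) : C ∈ M_m(ℂ), 0 ≤ C ≤ I, tr(C) = t }. In particular, ∫_0^1 λ_A(s) ds = tr(A). Furthermore, if A is positive, then ∫_0^t λ_A(s) ds = sup{ tr(AC) : C ∈ M_m(ℂ), 0 ≤ C ≤ I, tr(C) ≤ t }. -/

import Mathlib

open scoped Matrix Matrix.Norms.L2Operator ComplexOrder

/-- Eigenvalues of a Hermitian matrix listed in non-increasing order. -/
noncomputable def sortedEigs {m : ℕ} {A : Matrix (Fin m) (Fin m) ℂ}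
    (hA : A.IsHermitian) : Fin m → ℝ :=
  fun i => hA.eigenvalues (Tuple.sort hA.eigenvalues i.rev)

/-- The eigenvalue function `λ_A(s) = α_{⌊ms⌋+1}`. -/
noncomputable def eigFun {m : ℕ} {A : Matrix (Fin m) (Fin m) ℂ}
    (hA : A.IsHermitian) (s : ℝ) : ℝ :=
  if h : (⌊(m : ℝ) * s⌋).toNat < m then sortedEigs hA ⟨(⌊(m : ℝ) * s⌋).toNat, h⟩ else 0

/-- The normalized trace of a self-adjoint matrix. -/
noncomputable def ntr {m : ℕ} (A : Matrix (Fin m) (Fin m) ℂ) : ℝ :=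
  (Matrix.trace A).re / m

open MeasureTheory intervalIntegral

section Step
variable (m : ℕ) (α : ℕ → ℝ)

noncomputable def stepf : ℝ → ℝ := fun s => α (⌊(m:ℝ)*s⌋).toNat

lemma stepf_meas : Measurable (stepf m α) := by
  have h1 : Measurable fun s : ℝ => ⌊(m:ℝ)*s⌋ :=
    Int.measurable_floor.comp (measurable_const.mul measurable_id)
  exact (Measurable.of_discrete (f := fun n : ℤ => α n.toNat)).comp h1

lemma stepf_intable (a b : ℝ) : IntervalIntegrable (stepf m α) volume a b := by
  rw [intervalIntegrable_iff]
  apply Measure.integrableOn_of_bounded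
    (M := ∑ i ∈ Finset.range ((⌊(m:ℝ)*max a b⌋).toNat + 1), |α i|)
  · exact measure_Ioc_lt_top.ne
  · exact (stepf_meas m α).aestronglyMeasurable
  · filter_upwards [ae_restrict_mem measurableSet_uIoc] with x hx
    have hx' : x ≤ max a b := hx.2
    have h1 : (⌊(m:ℝ)*x⌋).toNat ≤ (⌊(m:ℝ)*max a b⌋).toNat :=
      Int.toNat_le_toNat (Int.floor_le_floor (by
        have : (0:ℝ) ≤ (m:ℝ) := by positivity
        nlinarith))
    calc ‖stepf m α x‖ = |α (⌊(m:ℝ)*x⌋).toNat| := rfl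
      _ ≤ ∑ i ∈ Finset.range ((⌊(m:ℝ)*max a b⌋).toNat + 1), |α i| :=
        Finset.single_le_sum (fun i _ => abs_nonneg (α i))
          (Finset.mem_range.mpr (Nat.lt_succ_of_le h1))

lemma stepf_piece (i : ℕ) (a b : ℝ) (ha : (i:ℝ)/m ≤ a) (hab : a ≤ b) (hb : b ≤ ((i:ℝ)+1)/m)
    (hm : 0 < m) :
    ∫ s in a..b, stepf m α s = (b - a) * α i := by
  have key : ∀ s ∈ Set.Ioo a b, stepf m α s = α i := by
    intro s hs
    have hmpos : (0:ℝ) < m := by exact_mod_cast hm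
    have h1 : (i:ℝ) ≤ (m:ℝ) * s := by
      have := hs.1
      nlinarith [div_le_iff₀ hmpos |>.mp ha]
    have h2 : (m:ℝ) * s < (i:ℝ) + 1 := by
      nlinarith [hs.2, (le_div_iff₀ hmpos).mp hb]
    have : ⌊(m:ℝ)*s⌋ = i := by
      rw [Int.floor_eq_iff]
      exact ⟨by exact_mod_cast h1, by exact_mod_cast h2⟩
    simp [stepf, this]
  have hae : ∀ᵐ x ∂(volume : Measure ℝ), x ∈ Set.uIoc a b → stepf m α x = α i := by
    have hb0 : (volume : Measure ℝ) {b} = 0 := measure_singleton b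
    filter_upwards [measure_eq_zero_iff_ae_notMem.mp hb0] with x hx hmem
    rw [Set.uIoc_of_le hab] at hmem
    exact key x ⟨hmem.1, lt_of_le_of_ne hmem.2 (fun h => hx h)⟩
  rw [integral_congr_ae hae, intervalIntegral.integral_const, smul_eq_mul]

end Step

lemma stepf_integral (m : ℕ) (α : ℕ → ℝ) (hm : 0 < m) (t : ℝ) (ht0 : 0 ≤ t) (ht1 : t ≤ 1) :
    ∫ s in (0:ℝ)..t, stepf m α s
      = (∑ i ∈ Finset.range (⌊(m:ℝ)*t⌋).toNat, α i
         + ((m:ℝ)*t - ((⌊(m:ℝ)*t⌋).toNat : ℝ)) * α (⌊(m:ℝ)*t⌋).toNat) / m := by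
  have hmpos : (0:ℝ) < m := by exact_mod_cast hm
  set k := (⌊(m:ℝ)*t⌋).toNat with hkdef
  have hmt0 : (0:ℝ) ≤ (m:ℝ)*t := by positivity
  have hfl : ((k:ℤ) : ℝ) = (⌊(m:ℝ)*t⌋ : ℝ) := by
    rw [hkdef]; exact_mod_cast congrArg (fun z : ℤ => (z : ℝ)) (Int.toNat_of_nonneg (Int.floor_nonneg.mpr hmt0))
  have hk_le : (k:ℝ) ≤ (m:ℝ)*t := by
    rw [show ((k:ℝ)) = ((k:ℤ):ℝ) by norm_cast, hfl]; exact Int.floor_le _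
  have hk_lt : (m:ℝ)*t < (k:ℝ) + 1 := by
    rw [show ((k:ℝ)) = ((k:ℤ):ℝ) by norm_cast, hfl]; exact Int.lt_floor_add_one _
  have h1 : ∫ s in (0:ℝ)..((k:ℝ)/m), stepf m α s = ∑ i ∈ Finset.range k, α i / m := by
    have := intervalIntegral.sum_integral_adjacent_intervals (f := stepf m α)
      (μ := volume) (a := fun i : ℕ => (i:ℝ)/m) (n := k)
      (fun j _ => stepf_intable m α _ _)
    simp only [Nat.cast_zero, zero_div] at this
    rw [← this]
    refine Finset.sum_congr rfl fun i _ => ?_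
    have hc : ((i+1 : ℕ) : ℝ)/m = ((i:ℝ)+1)/m := by push_cast; ring
    rw [hc, stepf_piece m α i ((i:ℝ)/m) (((i:ℝ)+1)/m) le_rfl
      (by apply div_le_div_of_nonneg_right (by linarith) hmpos.le) le_rfl hm]
    field_simp
    ring
  have h2 : ∫ s in ((k:ℝ)/m)..t, stepf m α s = (t - (k:ℝ)/m) * α k := by
    refine stepf_piece m α k ((k:ℝ)/m) t le_rfl ?_ ?_ hm
    · rw [div_le_iff₀ hmpos]; linarith
    · rw [le_div_iff₀ hmpos]; linarith
  have h3 : ∫ s in (0:ℝ)..t, stepf m α s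
      = (∫ s in (0:ℝ)..((k:ℝ)/m), stepf m α s) + ∫ s in ((k:ℝ)/m)..t, stepf m α s :=
    (intervalIntegral.integral_add_adjacent_intervals (stepf_intable m α _ _)
      (stepf_intable m α _ _)).symm
  rw [h3, h1, h2, ← Finset.sum_div, eq_div_iff hmpos.ne']
  field_simp

noncomputable def capf (k : ℕ) (θ : ℝ) {m : ℕ} : Fin m → ℝ :=
  fun i => if (i:ℕ) < k then 1 else if (i:ℕ) = k then θ else 0

lemma capf_nonneg {m : ℕ} (k : ℕ) {θ : ℝ} (hθ0 : 0 ≤ θ) (i : Fin m) : 0 ≤ capf k θ i := by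
  unfold capf; split_ifs <;> norm_num [hθ0]

lemma capf_le_one {m : ℕ} (k : ℕ) {θ : ℝ} (hθ1 : θ ≤ 1) (i : Fin m) : capf k θ i ≤ 1 := by
  unfold capf; split_ifs <;> norm_num [hθ1]

lemma lp_bound {m : ℕ} (k : ℕ) (θ : ℝ) (hθ0 : 0 ≤ θ) (hθ1 : θ ≤ 1)
    (α : Fin m → ℝ) (hα : Antitone α)
    (c : Fin m → ℝ) (hc0 : ∀ i, 0 ≤ c i) (hc1 : ∀ i, c i ≤ 1)
    (hsum : ∑ i, c i = ∑ i : Fin m, capf k θ i) :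
    ∑ i, α i * c i ≤ ∑ i, α i * capf k θ i := by
  by_cases hkm : k < m
  · set p := α ⟨k, hkm⟩ with hp
    have key : ∑ i, (α i - p) * (c i - capf k θ i) ≤ 0 := by
      refine Finset.sum_nonpos fun i _ => ?_
      rcases lt_trichotomy (i:ℕ) k with h | h | h
      · have h1 : 0 ≤ α i - p := by
          simp only [sub_nonneg, hp]
          exact hα (by simp [Fin.le_def, h.le])
        have h2 : c i - capf k θ i ≤ 0 := by
          simp only [capf, if_pos h, sub_nonpos]; exact hc1 i
        exact mul_nonpos_of_nonneg_of_nonpos h1 h2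
      · have : α i = p := by rw [hp]; congr 1; exact Fin.ext h
        simp [this]
      · have h1 : α i - p ≤ 0 := by
          simp only [sub_nonpos, hp]
          exact hα (by simp [Fin.le_def, h.le])
        have h2 : 0 ≤ c i - capf k θ i := by
          have hz : capf k θ i = 0 := by
            unfold capf
            rw [if_neg (by omega), if_neg (by omega)]
          rw [hz, sub_zero]; exact hc0 i
        exact mul_nonpos_of_nonpos_of_nonneg h1 h2
    have expand : ∑ i, (α i - p) * (c i - capf k θ i)
        = ∑ i, α i * c i - ∑ i, α i * capf k θ i - p * (∑ i : Fin m, c i - ∑ i : Fin m, capf k θ i) := by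
      simp only [sub_mul, mul_sub, Finset.sum_sub_distrib, Finset.mul_sum]
      ring
    rw [expand, hsum] at key
    linarith
  · -- k ≥ m : capf = 1 everywhere, c forced to be 1
    have hB : ∀ i : Fin m, capf k θ i = 1 := fun i => by
      simp [capf, lt_of_lt_of_le i.isLt (le_of_not_gt hkm)]
    have hceq : ∀ i : Fin m, c i = 1 := by
      have h0 : ∑ i, (1 - c i) = 0 := by
        have hall : ∑ i : Fin m, capf k θ i = m := by
          rw [Finset.sum_congr rfl fun i _ => hB i]
          simp
        simp only [Finset.sum_sub_distrib, hsum, hall, Finset.sum_const, Finset.card_univ,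
          Fintype.card_fin, nsmul_eq_mul, mul_one, sub_self]
      intro i
      have := (Finset.sum_eq_zero_iff_of_nonneg (fun j _ => by linarith [hc1 j])).mp h0 i
        (Finset.mem_univ i)
      linarith
    refine le_of_eq (Finset.sum_congr rfl fun i _ => by rw [hceq i, hB i])

open Matrix in
lemma psd_diag_re_nonneg {m : ℕ} {C : Matrix (Fin m) (Fin m) ℂ} (hC : C.PosSemidef)
    (i : Fin m) : 0 ≤ (C i i).re ∧ (C i i).im = 0 := by
  have h := hC.dotProduct_mulVec_nonneg (Pi.single i 1)
  have heq : dotProduct (star (Pi.single i 1)) (C *ᵥ Pi.single i 1) = C i i := by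
    simp [dotProduct, Matrix.mulVec, Pi.single_apply, Finset.sum_ite_eq', Finset.sum_ite_eq]
  rw [heq] at h
  rw [Complex.le_def] at h
  exact ⟨by simpa using h.1, by simpa using h.2.symm⟩

open Matrix in
lemma trace_diagonal_mul' {m : ℕ} (d : Fin m → ℂ) (M : Matrix (Fin m) (Fin m) ℂ) :
    Matrix.trace (Matrix.diagonal d * M) = ∑ i, d i * M i i := by
  simp [Matrix.trace, Matrix.diag, Matrix.mul_apply, Matrix.diagonal_apply, Finset.sum_ite_eq]

lemma sum_mul_capf {m k : ℕ} (hkm : k ≤ m) (θ : ℝ) (β : Fin m → ℝ) (β' : ℕ → ℝ)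
    (hβ : ∀ i : Fin m, β' i = β i) :
    ∑ i : Fin m, β i * capf k θ i = ∑ i ∈ Finset.range k, β' i + θ * β' k
      - (if k < m then 0 else θ * β' k) := by
  have hterm : ∀ i : Fin m, β i * capf k θ i
      = (if (i:ℕ) < k then β' i else 0) + (if (i:ℕ) = k then θ * β' i else 0) := by
    intro i
    unfold capf
    rcases lt_trichotomy (i:ℕ) k with h | h | h
    · rw [if_pos h, if_pos h, if_neg (by omega), mul_one, add_zero, hβ]
    · rw [if_neg (by omega), if_pos h, if_neg (by omega), if_pos h, zero_add, hβ]; ring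
    · rw [if_neg (by omega), if_neg (by omega), if_neg (by omega), if_neg (by omega)]; ring
  rw [Finset.sum_congr rfl fun i _ => hterm i, Finset.sum_add_distrib]
  have h1 : ∑ i : Fin m, (if (i:ℕ) < k then β' i else 0) = ∑ i ∈ Finset.range k, β' i := by
    rw [Fin.sum_univ_eq_sum_range (fun j => if j < k then β' j else 0) m]
    rw [← Finset.sum_subset (Finset.range_subset_range.mpr hkm)
      (fun x _ hx => if_neg (by simpa using hx))]
    exact Finset.sum_congr rfl fun j hj => if_pos (Finset.mem_range.mp hj)
  have h2 : ∑ i : Fin m, (if (i:ℕ) = k then θ * β' i else 0)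
      = θ * β' k - (if k < m then 0 else θ * β' k) := by
    by_cases hk : k < m
    · rw [if_pos hk, sub_zero]
      have : ∀ i : Fin m, (if (i:ℕ) = k then θ * β' i else 0)
          = (if i = (⟨k, hk⟩ : Fin m) then θ * β' k else 0) := by
        intro i
        by_cases h : (i:ℕ) = k
        · rw [if_pos h, if_pos (Fin.ext h), h]
        · rw [if_neg h, if_neg (fun hh => h (by rw [hh]))]
      rw [Finset.sum_congr rfl fun i _ => this i, Finset.sum_ite_eq' Finset.univ]
      simp
    · rw [if_neg hk, sub_self]
      refine Finset.sum_eq_zero fun i _ => if_neg (by omega)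
  rw [h1, h2]
  ring

lemma sortedEigs_antitone {m : ℕ} {A : Matrix (Fin m) (Fin m) ℂ} (hA : A.IsHermitian) :
    Antitone (sortedEigs hA) := by
  intro i j hij
  exact Tuple.monotone_sort hA.eigenvalues (Fin.rev_le_rev.mpr hij)

lemma floor_facts {m : ℕ} (hm : 1 ≤ m) {t : ℝ} (ht : t ∈ Set.Icc (0:ℝ) 1) :
    ((⌊(m:ℝ)*t⌋).toNat ≤ m) ∧ (((⌊(m:ℝ)*t⌋).toNat : ℝ) ≤ (m:ℝ)*t)
      ∧ ((m:ℝ)*t < ((⌊(m:ℝ)*t⌋).toNat : ℝ) + 1) := by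
  have hmpos : (0:ℝ) < m := by exact_mod_cast hm
  have hmt0 : (0:ℝ) ≤ (m:ℝ)*t := mul_nonneg hmpos.le ht.1
  have hfl : (((⌊(m:ℝ)*t⌋).toNat : ℤ) : ℝ) = ((⌊(m:ℝ)*t⌋ : ℤ) : ℝ) := by
    exact_mod_cast congrArg (fun z : ℤ => (z : ℝ)) (Int.toNat_of_nonneg (Int.floor_nonneg.mpr hmt0))
  have h2 : (((⌊(m:ℝ)*t⌋).toNat : ℕ) : ℝ) ≤ (m:ℝ)*t := by
    rw [show (((⌊(m:ℝ)*t⌋).toNat : ℕ) : ℝ) = (((⌊(m:ℝ)*t⌋).toNat : ℤ) : ℝ) by norm_cast, hfl]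
    exact Int.floor_le _
  have h3 : (m:ℝ)*t < (((⌊(m:ℝ)*t⌋).toNat : ℕ) : ℝ) + 1 := by
    rw [show (((⌊(m:ℝ)*t⌋).toNat : ℕ) : ℝ) = (((⌊(m:ℝ)*t⌋).toNat : ℤ) : ℝ) by norm_cast, hfl]
    exact Int.lt_floor_add_one _
  refine ⟨?_, h2, h3⟩
  have : (((⌊(m:ℝ)*t⌋).toNat : ℕ) : ℝ) ≤ (m:ℝ) := le_trans h2 (by nlinarith [ht.2])
  exact_mod_cast this

lemma theta_facts {m : ℕ} (hm : 1 ≤ m) {t : ℝ} (ht : t ∈ Set.Icc (0:ℝ) 1) :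
    0 ≤ (m:ℝ)*t - ((⌊(m:ℝ)*t⌋).toNat : ℝ) ∧ (m:ℝ)*t - ((⌊(m:ℝ)*t⌋).toNat : ℝ) ≤ 1 := by
  obtain ⟨_, h2, h3⟩ := floor_facts hm ht
  constructor <;> linarith

lemma capf_sum {m : ℕ} (hm : 1 ≤ m) {t : ℝ} (ht : t ∈ Set.Icc (0:ℝ) 1) :
    ∑ i : Fin m, capf (⌊(m:ℝ)*t⌋).toNat ((m:ℝ)*t - ((⌊(m:ℝ)*t⌋).toNat : ℝ)) i = (m:ℝ)*t := by
  obtain ⟨hkm, h2, h3⟩ := floor_facts hm ht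
  set k := (⌊(m:ℝ)*t⌋).toNat with hk
  set θ := (m:ℝ)*t - (k:ℝ) with hθ
  have := sum_mul_capf hkm θ (fun _ : Fin m => (1:ℝ)) (fun n => if n < m then 1 else 0)
    (fun i => if_pos i.isLt)
  simp only [one_mul] at this
  rw [this]
  by_cases hklt : k < m
  · rw [if_pos hklt, if_pos hklt]
    simp only [sub_zero]
    have : ∑ i ∈ Finset.range k, (if i < m then (1:ℝ) else 0) = k := by
      rw [Finset.sum_congr rfl fun j hj => if_pos (lt_of_lt_of_le (Finset.mem_range.mp hj) hkm)]
      simp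
    rw [this, mul_one]
    ring
  · have hkm' : k = m := le_antisymm hkm (le_of_not_gt hklt)
    rw [if_neg hklt, if_neg (by omega)]
    have : ∑ i ∈ Finset.range k, (if i < m then (1:ℝ) else 0) = k := by
      rw [Finset.sum_congr rfl fun j hj => if_pos (lt_of_lt_of_le (Finset.mem_range.mp hj) hkm)]
      simp
    rw [this]
    have hmt : (m:ℝ)*t = k := by
      have : (k:ℝ) = m := by exact_mod_cast hkm'
      nlinarith [ht.2, show (0:ℝ) < m by exact_mod_cast hm]
    rw [hmt]
    ring

lemma integral_eigFun {m : ℕ} (hm : 1 ≤ m) {A : Matrix (Fin m) (Fin m) ℂ}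
    (hA : A.IsHermitian) {t : ℝ} (ht : t ∈ Set.Icc (0:ℝ) 1) :
    ∫ s in (0:ℝ)..t, eigFun hA s
      = (∑ i : Fin m, sortedEigs hA i *
          capf (⌊(m:ℝ)*t⌋).toNat ((m:ℝ)*t - ((⌊(m:ℝ)*t⌋).toNat : ℝ)) i) / m := by
  obtain ⟨hkm, h2, h3⟩ := floor_facts hm ht
  set k := (⌊(m:ℝ)*t⌋).toNat with hk
  set θ := (m:ℝ)*t - (k:ℝ) with hθ
  set β' : ℕ → ℝ := fun n => if h : n < m then sortedEigs hA ⟨n, h⟩ else 0 with hβ'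
  have hfun : (fun s => eigFun hA s) = stepf m β' := by
    funext s
    simp only [eigFun, stepf, hβ']
  have := stepf_integral m β' hm t ht.1 ht.2
  rw [intervalIntegral.integral_congr (fun s _ => congrFun hfun s), this]
  congr 1
  have := sum_mul_capf hkm θ (sortedEigs hA) β' (fun i => by simp [hβ', i.isLt])
  rw [this]
  by_cases hklt : k < m
  · rw [if_pos hklt]; ring
  · rw [if_neg hklt]
    have : β' k = 0 := dif_neg (by omega)
    rw [this]
    ring

open Matrix in
lemma trace_A_mul {m : ℕ} {A : Matrix (Fin m) (Fin m) ℂ} (hA : A.IsHermitian)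
    (C : Matrix (Fin m) (Fin m) ℂ) :
    Matrix.trace (A * C) = ∑ i, (hA.eigenvalues i : ℂ) *
      ((star (hA.eigenvectorUnitary : Matrix (Fin m) (Fin m) ℂ) * C *
        (hA.eigenvectorUnitary : Matrix (Fin m) (Fin m) ℂ)) i i) := by
  set U := (hA.eigenvectorUnitary : Matrix (Fin m) (Fin m) ℂ) with hU
  have hD : (RCLike.ofReal ∘ hA.eigenvalues : Fin m → ℂ) = fun i => (hA.eigenvalues i : ℂ) := rfl
  have h1 : A * C = U * (Matrix.diagonal (fun i => (hA.eigenvalues i : ℂ)) * star U * C) := by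
    conv_lhs => rw [hA.spectral_theorem]
    rw [hD]
    simp only [Unitary.conjStarAlgAut_apply, Matrix.mul_assoc]
    rfl
  rw [h1, Matrix.trace_mul_comm, ← trace_diagonal_mul']
  congr 1
  simp only [Matrix.mul_assoc]

open Matrix in
lemma ub {m : ℕ} (hm : 1 ≤ m) {A : Matrix (Fin m) (Fin m) ℂ} (hA : A.IsHermitian)
    {t : ℝ} (ht : t ∈ Set.Icc (0:ℝ) 1)
    (C : Matrix (Fin m) (Fin m) ℂ) (hC : C.PosSemidef)
    (h1C : ((1 : Matrix (Fin m) (Fin m) ℂ) - C).PosSemidef)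
    (htr : ntr C = t) :
    ntr (A * C) ≤ ∫ s in (0:ℝ)..t, eigFun hA s := by
  have hmpos : (0:ℝ) < m := by exact_mod_cast hm
  set U := (hA.eigenvectorUnitary : Matrix (Fin m) (Fin m) ℂ) with hU
  have hU2 : U * star U = 1 := Matrix.mem_unitaryGroup_iff.mp (hA.eigenvectorUnitary).2
  have hU1 : star U * U = 1 := Matrix.mem_unitaryGroup_iff'.mp (hA.eigenvectorUnitary).2
  set C' := star U * C * U with hC'def
  have hC' : C'.PosSemidef := by
    have := hC.conjTranspose_mul_mul_same U
    rwa [← Matrix.star_eq_conjTranspose] at this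
  have h1C' : ((1 : Matrix (Fin m) (Fin m) ℂ) - C').PosSemidef := by
    have := h1C.conjTranspose_mul_mul_same U
    rw [← Matrix.star_eq_conjTranspose] at this
    have heq : star U * (1 - C) * U = 1 - C' := by
      rw [Matrix.mul_sub, Matrix.mul_one, Matrix.sub_mul, hU1, hC'def]
    rwa [heq] at this
  set cc : Fin m → ℝ := fun i => (C' i i).re with hcc
  have hcc0 : ∀ i, 0 ≤ cc i := fun i => (psd_diag_re_nonneg hC' i).1
  have hcc1 : ∀ i, cc i ≤ 1 := by
    intro i
    have := (psd_diag_re_nonneg h1C' i).1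
    simp only [Matrix.sub_apply, Matrix.one_apply_eq, Complex.sub_re, Complex.one_re] at this
    linarith
  have htrC' : Matrix.trace C' = Matrix.trace C := by
    rw [hC'def, Matrix.trace_mul_comm, ← Matrix.mul_assoc, hU2, Matrix.one_mul]
  have hccsum : ∑ i, cc i = (m:ℝ) * t := by
    have h1 : ∑ i, cc i = (Matrix.trace C').re := by
      simp only [Matrix.trace, Matrix.diag, Complex.re_sum, hcc]
    rw [h1, htrC']
    have : (Matrix.trace C).re / m = t := htr
    field_simp at this
    linarith
  -- the permutation
  set e := hA.eigenvalues with he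
  set σ : Equiv.Perm (Fin m) := (Fin.revPerm).trans (Tuple.sort e) with hσ
  have hσα : ∀ j, e (σ j) = sortedEigs hA j := fun j => rfl
  have hre : ntr (A * C) = (∑ i, e i * cc i) / m := by
    unfold ntr
    rw [trace_A_mul hA C]
    congr 1
    rw [Complex.re_sum]
    exact Finset.sum_congr rfl fun i _ => Complex.re_ofReal_mul _ _
  have hperm : ∑ i, e i * cc i = ∑ j, sortedEigs hA j * cc (σ j) := by
    rw [← Equiv.sum_comp σ (fun i => e i * cc i)]
    exact Finset.sum_congr rfl fun j _ => by rw [hσα]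
  set k := (⌊(m:ℝ)*t⌋).toNat with hk
  set θ := (m:ℝ)*t - (k:ℝ) with hθ
  obtain ⟨hθ0, hθ1⟩ := theta_facts hm ht
  have hlp : ∑ j, sortedEigs hA j * cc (σ j) ≤ ∑ j, sortedEigs hA j * capf k θ j := by
    refine lp_bound k θ hθ0 hθ1 (sortedEigs hA) (sortedEigs_antitone hA)
      (fun j => cc (σ j)) (fun j => hcc0 _) (fun j => hcc1 _) ?_
    rw [Equiv.sum_comp σ cc, hccsum, capf_sum hm ht]
  rw [integral_eigFun hm hA ht, hre, hperm]
  gcongr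

open Matrix in
lemma ach {m : ℕ} (hm : 1 ≤ m) {A : Matrix (Fin m) (Fin m) ℂ} (hA : A.IsHermitian)
    {t : ℝ} (ht : t ∈ Set.Icc (0:ℝ) 1) :
    ∃ C : Matrix (Fin m) (Fin m) ℂ, C.PosSemidef ∧
      ((1 : Matrix (Fin m) (Fin m) ℂ) - C).PosSemidef ∧ ntr C = t ∧
      ntr (A * C) = ∫ s in (0:ℝ)..t, eigFun hA s := by
  have hmpos : (0:ℝ) < m := by exact_mod_cast hm
  set U := (hA.eigenvectorUnitary : Matrix (Fin m) (Fin m) ℂ) with hU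
  have hU2 : U * star U = 1 := Matrix.mem_unitaryGroup_iff.mp (hA.eigenvectorUnitary).2
  have hU1 : star U * U = 1 := Matrix.mem_unitaryGroup_iff'.mp (hA.eigenvectorUnitary).2
  set e := hA.eigenvalues with he
  set σ : Equiv.Perm (Fin m) := (Fin.revPerm).trans (Tuple.sort e) with hσ
  have hσα : ∀ j, e (σ j) = sortedEigs hA j := fun j => rfl
  set k := (⌊(m:ℝ)*t⌋).toNat with hk
  set θ := (m:ℝ)*t - (k:ℝ) with hθ
  obtain ⟨hθ0, hθ1⟩ := theta_facts hm ht
  set d : Fin m → ℝ := fun i => capf k θ (σ.symm i) with hd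
  have hd0 : ∀ i, 0 ≤ d i := fun i => capf_nonneg k hθ0 _
  have hd1 : ∀ i, d i ≤ 1 := fun i => capf_le_one k hθ1 _
  set D : Matrix (Fin m) (Fin m) ℂ := Matrix.diagonal (fun i => (d i : ℂ)) with hD
  refine ⟨U * D * star U, ?_, ?_, ?_, ?_⟩
  · have hDpsd : D.PosSemidef := Matrix.PosSemidef.diagonal
      (fun i => Complex.zero_le_real.mpr (hd0 i))
    have := hDpsd.mul_mul_conjTranspose_same U
    rwa [← Matrix.star_eq_conjTranspose] at this
  · have h1D : ((1 : Matrix (Fin m) (Fin m) ℂ) - D).PosSemidef := by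
      have : (1 : Matrix (Fin m) (Fin m) ℂ) - D
          = Matrix.diagonal (fun i => ((1 - d i : ℝ) : ℂ)) := by
        rw [hD, ← Matrix.diagonal_one, Matrix.diagonal_sub]
        congr 1
        funext i
        push_cast
        ring
      rw [this]
      exact Matrix.PosSemidef.diagonal
        (fun i => Complex.zero_le_real.mpr (by linarith [hd1 i]))
    have := h1D.mul_mul_conjTranspose_same U
    rw [← Matrix.star_eq_conjTranspose, Matrix.mul_sub, Matrix.mul_one, Matrix.sub_mul, hU2]
      at this
    exact this
  · unfold ntr
    rw [Matrix.trace_mul_cycle, hU1, Matrix.one_mul]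
    have : Matrix.trace D = ((∑ i, d i : ℝ) : ℂ) := by
      rw [hD, Matrix.trace_diagonal]
      push_cast
      rfl
    rw [this, Complex.ofReal_re]
    have hsd : ∑ i, d i = (m:ℝ)*t := by
      rw [hd]
      have := Equiv.sum_comp σ.symm (capf k θ (m := m))
      dsimp only at this ⊢
      rw [this, capf_sum hm ht]
    rw [hsd]
    field_simp
  · unfold ntr
    rw [trace_A_mul hA (U * D * star U)]
    have hmid : star U * (U * D * star U) * U = D := by
      rw [← Matrix.mul_assoc, ← Matrix.mul_assoc, hU1, Matrix.one_mul, Matrix.mul_assoc,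
        hU1, Matrix.mul_one]
    rw [hmid]
    have : ∑ i, (e i : ℂ) * D i i = ((∑ i, e i * d i : ℝ) : ℂ) := by
      rw [hD]
      push_cast
      refine Finset.sum_congr rfl fun i _ => ?_
      rw [Matrix.diagonal_apply_eq]
    rw [this, Complex.ofReal_re]
    have hperm : ∑ i, e i * d i = ∑ j, sortedEigs hA j * capf k θ j := by
      rw [← Equiv.sum_comp σ (fun i => e i * d i)]
      refine Finset.sum_congr rfl fun j _ => ?_
      rw [hσα, hd]
      dsimp only
      rw [Equiv.symm_apply_apply]
    rw [hperm, integral_eigFun hm hA ht]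

lemma int_one {m : ℕ} (hm : 1 ≤ m) {A : Matrix (Fin m) (Fin m) ℂ} (hA : A.IsHermitian) :
    (∫ s in (0:ℝ)..1, eigFun hA s) = ntr A := by
  have h1 : (1:ℝ) ∈ Set.Icc (0:ℝ) 1 := ⟨zero_le_one, le_refl 1⟩
  rw [integral_eigFun hm hA h1]
  have hk : (⌊(m:ℝ)*1⌋).toNat = m := by
    rw [mul_one]
    norm_num
  have hcap : ∀ i : Fin m, capf (⌊(m:ℝ)*1⌋).toNat ((m:ℝ)*1 - ((⌊(m:ℝ)*1⌋).toNat : ℝ)) i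
      = 1 := by
    intro i
    unfold capf
    rw [if_pos (by rw [hk]; exact i.isLt)]
  rw [Finset.sum_congr rfl fun i _ => by rw [hcap i, mul_one]]
  unfold ntr
  congr 1
  set e := hA.eigenvalues with he
  set σ : Equiv.Perm (Fin m) := (Fin.revPerm).trans (Tuple.sort e) with hσ
  have hperm : ∑ i, sortedEigs hA i = ∑ i, e i := Equiv.sum_comp σ e
  rw [hperm]
  have := trace_A_mul hA 1
  rw [Matrix.mul_one] at this
  rw [this, Complex.re_sum]
  refine Finset.sum_congr rfl fun i _ => ?_
  have hU1 : star (hA.eigenvectorUnitary : Matrix (Fin m) (Fin m) ℂ) *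
      (hA.eigenvectorUnitary : Matrix (Fin m) (Fin m) ℂ) = 1 :=
    Matrix.mem_unitaryGroup_iff'.mp (hA.eigenvectorUnitary).2
  rw [Matrix.mul_one, hU1]
  simp [Matrix.one_apply_eq, he]

lemma eigFun_intable {m : ℕ} {A : Matrix (Fin m) (Fin m) ℂ} (hA : A.IsHermitian) (a b : ℝ) :
    IntervalIntegrable (eigFun hA) MeasureTheory.volume a b := by
  have hfun : eigFun hA = stepf m (fun n => if h : n < m then sortedEigs hA ⟨n, h⟩ else 0) := by
    funext s; simp only [eigFun, stepf]
  rw [hfun]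
  exact stepf_intable _ _ a b

lemma eigFun_nonneg {m : ℕ} {A : Matrix (Fin m) (Fin m) ℂ} (hA : A.IsHermitian)
    (hpos : A.PosSemidef) (s : ℝ) : 0 ≤ eigFun hA s := by
  unfold eigFun
  split_ifs with h
  · exact hpos.eigenvalues_nonneg _
  · exact le_refl 0

lemma integral_mono' {m : ℕ} {A : Matrix (Fin m) (Fin m) ℂ} (hA : A.IsHermitian)
    (hpos : A.PosSemidef) {t' t : ℝ} (h : t' ≤ t) :
    (∫ s in (0:ℝ)..t', eigFun hA s) ≤ ∫ s in (0:ℝ)..t, eigFun hA s := by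
  rw [← intervalIntegral.integral_add_adjacent_intervals (eigFun_intable hA 0 t')
    (eigFun_intable hA t' t)]
  have : 0 ≤ ∫ s in t'..t, eigFun hA s :=
    intervalIntegral.integral_nonneg h (fun u _ => eigFun_nonneg hA hpos u)
  linarith

lemma ntr_nonneg {m : ℕ} {C : Matrix (Fin m) (Fin m) ℂ} (hC : C.PosSemidef) : 0 ≤ ntr C := by
  unfold ntr
  apply div_nonneg _ (Nat.cast_nonneg m)
  rw [Matrix.trace, Complex.re_sum]
  exact Finset.sum_nonneg fun i _ => (psd_diag_re_nonneg hC i).1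

theorem stmt11 (m : ℕ) (hm : 1 ≤ m) (A : Matrix (Fin m) (Fin m) ℂ)
    (hA : A.IsHermitian) (t : ℝ) (ht : t ∈ Set.Icc (0 : ℝ) 1) :
    (∫ s in (0 : ℝ)..t, eigFun hA s) =
      sSup {x : ℝ | ∃ C : Matrix (Fin m) (Fin m) ℂ,
        C.PosSemidef ∧ ((1 : Matrix (Fin m) (Fin m) ℂ) - C).PosSemidef ∧
        ntr C = t ∧ x = ntr (A * C)} ∧
    (∫ s in (0 : ℝ)..1, eigFun hA s) = ntr A ∧
    (A.PosSemidef →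
      (∫ s in (0 : ℝ)..t, eigFun hA s) =
        sSup {x : ℝ | ∃ C : Matrix (Fin m) (Fin m) ℂ,
          C.PosSemidef ∧ ((1 : Matrix (Fin m) (Fin m) ℂ) - C).PosSemidef ∧
          ntr C ≤ t ∧ x = ntr (A * C)}) := by
  obtain ⟨ht0, ht1⟩ := ht
  refine ⟨?_, int_one hm hA, ?_⟩
  · symm
    apply IsGreatest.csSup_eq
    constructor
    · obtain ⟨C, h1, h2, h3, h4⟩ := ach hm hA ⟨ht0, ht1⟩
      exact ⟨C, h1, h2, h3, h4.symm⟩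
    · rintro x ⟨C, h1, h2, h3, rfl⟩
      exact ub hm hA ⟨ht0, ht1⟩ C h1 h2 h3
  · intro hpos
    symm
    apply IsGreatest.csSup_eq
    constructor
    · obtain ⟨C, h1, h2, h3, h4⟩ := ach hm hA ⟨ht0, ht1⟩
      exact ⟨C, h1, h2, le_of_eq h3, h4.symm⟩
    · rintro x ⟨C, h1, h2, h3, rfl⟩
      have ht' : ntr C ∈ Set.Icc (0:ℝ) 1 := ⟨ntr_nonneg h1, le_trans h3 ht1⟩
      exact (ub hm hA ht' C h1 h2 rfl).trans (integral_mono' hA hpos h3)
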